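/- The function f(μ) = (2μ - sin(2μ))/(1 - cos(2μ)) is strictly monotone increasing on (0, π/2). -/

import Mathlib

open Real

lemma dru_aux_deriv (μ : ℝ) (hv : 1 - Real.cos (2*μ) ≠ 0) :
    HasDerivAt (fun x : ℝ => (2 * x - Real.sin (2 * x)) / (1 - Real.cos (2 * x)))
      (((2 - Real.cos (2*μ)*2) * (1 - Real.cos (2*μ)) -
        (2*μ - Real.sin (2*μ)) * (Real.sin (2*μ)*2)) / (1 - Real.cos (2*μ))^2) μ := by
  have h2 : HasDerivAt (fun x : ℝ => 2*x) 2 μ := by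
    simpa using (hasDerivAt_id μ).const_mul 2
  have hsin : HasDerivAt (fun x : ℝ => Real.sin (2*x)) (Real.cos (2*μ) * 2) μ :=
    (Real.hasDerivAt_sin (2*μ)).comp μ h2
  have hcos : HasDerivAt (fun x : ℝ => Real.cos (2*x)) (-Real.sin (2*μ) * 2) μ :=
    (Real.hasDerivAt_cos (2*μ)).comp μ h2
  have hu : HasDerivAt (fun x : ℝ => 2*x - Real.sin (2*x)) (2 - Real.cos (2*μ)*2) μ :=
    h2.sub hsin
  have hv' : HasDerivAt (fun x : ℝ => 1 - Real.cos (2*x)) (Real.sin (2*μ)*2) μ := by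
    have := (hasDerivAt_const μ (1:ℝ)).sub hcos
    simp only [zero_sub, neg_mul, neg_neg] at this; exact this
  exact hu.div hv' hv

theorem dru_power_factor_ratio_strictMonoOn :
    StrictMonoOn (fun μ : ℝ => (2 * μ - Real.sin (2 * μ)) / (1 - Real.cos (2 * μ)))
      (Set.Ioo 0 (π / 2)) := by
  have hvpos : ∀ μ ∈ Set.Ioo 0 (π/2), 0 < 1 - Real.cos (2*μ) := by
    intro μ hμ
    have hs : 0 < Real.sin μ := Real.sin_pos_of_pos_of_lt_pi hμ.1 (by linarith [hμ.2, pi_pos])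
    have : Real.cos (2*μ) = 1 - 2 * Real.sin μ ^ 2 := by rw [Real.cos_two_mul]; nlinarith [Real.sin_sq_add_cos_sq μ]
    nlinarith
  apply strictMonoOn_of_deriv_pos (convex_Ioo 0 (π/2))
  · apply ContinuousOn.div
    · fun_prop
    · fun_prop
    · intro μ hμ
      exact ne_of_gt (hvpos μ hμ)
  · intro μ hμ
    rw [interior_Ioo] at hμ
    obtain ⟨h0, h1⟩ := hμ
    have hv := hvpos μ ⟨h0, h1⟩
    have hd := dru_aux_deriv μ (ne_of_gt hv)
    rw [hd.deriv]
    apply div_pos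
    · have hs : 0 < Real.sin μ := Real.sin_pos_of_pos_of_lt_pi h0 (by linarith [pi_pos])
      have hc : 0 < Real.cos μ := Real.cos_pos_of_mem_Ioo ⟨by linarith, h1⟩
      have htan : μ < Real.tan μ := Real.lt_tan h0 h1
      have hkey : μ * Real.cos μ < Real.sin μ := by
        have := mul_lt_mul_of_pos_right htan hc
        rwa [Real.tan_eq_sin_div_cos, div_mul_cancel₀ _ (ne_of_gt hc)] at this
      have hc2 : Real.cos (2*μ) = 1 - 2 * Real.sin μ ^ 2 := by
        rw [Real.cos_two_mul]; nlinarith [Real.sin_sq_add_cos_sq μ]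
      have hs2 : Real.sin (2*μ) = 2 * Real.sin μ * Real.cos μ := Real.sin_two_mul μ
      rw [hc2, hs2]
      nlinarith [mul_pos hs (sub_pos.mpr hkey), Real.sin_sq_add_cos_sq μ, sq_nonneg (Real.sin μ)]
    · positivity
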